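/- Backward parameter-Lipschitz bound. Consider the ResNet with input ‖x‖₂ ≤ B and activation satisfying the stated regularity conditions. Define δ^{(L)}(θ) = (σ_w/√n)·w^{(L+1)} and δ^{(ℓ)}(θ) = ( I_n + α·(σ_w/√n)·W^{(ℓ+1)ᵀ}·diag{φ'(g^{(ℓ+1)})}·(σ_v/√n)·V^{(ℓ+1)ᵀ} )·δ^{(ℓ+1)}(θ) for ℓ = L−1,…,0. There exists a constant K depending only on L, α, σ_v, σ_w, C_φ, B, and d (and not on n) such that for all parameter vectors θ, θ̃ both satisfying the spectral bounds, and for every ℓ ∈ {0,1,…,L}: ‖δ^{(ℓ)}(θ) − δ^{(ℓ)}(θ̃)‖₂ ≤ K·‖θ − θ̃‖₂, where ‖θ − θ̃‖₂ is the Euclidean norm of the difference of the full (vectorized) parameter vectors. -/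

import Mathlib

open MeasureTheory ProbabilityTheory Filter

noncomputable section

/-- Index type for all ResNet parameters: w^{(L+1)}, {W^{(ℓ)}}, {V^{(ℓ)}}, U. -/
abbrev ParamIdx (n L d : ℕ) : Type :=
  (Fin n) ⊕ (Fin L × Fin n × Fin n) ⊕ (Fin L × Fin n × Fin n) ⊕ (Fin n × Fin d)

/-- The full (vectorized) parameter vector. -/
abbrev Params (n L d : ℕ) : Type := ParamIdx n L d → ℝ

/-- Last-layer weight vector w^{(L+1)}. -/
def wOut {n L d : ℕ} (θ : Params n L d) : Fin n → ℝ := fun i => θ (Sum.inl i)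

/-- W^{(ℓ)} for ℓ = 1,…,L (zero outside this range). -/
def Wmat {n L d : ℕ} (θ : Params n L d) (ℓ : ℕ) : Matrix (Fin n) (Fin n) ℝ :=
  if h : 1 ≤ ℓ ∧ ℓ ≤ L then
    Matrix.of fun i j => θ (Sum.inr (Sum.inl (⟨ℓ - 1, by omega⟩, i, j)))
  else 0

/-- V^{(ℓ)} for ℓ = 1,…,L (zero outside this range). -/
def Vmat {n L d : ℕ} (θ : Params n L d) (ℓ : ℕ) : Matrix (Fin n) (Fin n) ℝ :=
  if h : 1 ≤ ℓ ∧ ℓ ≤ L then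
    Matrix.of fun i j => θ (Sum.inr (Sum.inr (Sum.inl (⟨ℓ - 1, by omega⟩, i, j))))
  else 0

/-- Input lifting matrix U. -/
def Umat {n L d : ℕ} (θ : Params n L d) : Matrix (Fin n) (Fin d) ℝ :=
  Matrix.of fun i j => θ (Sum.inr (Sum.inr (Sum.inr (i, j))))

/-- Euclidean (ℓ²) norm of a finite vector. -/
def l2norm {k : ℕ} (v : Fin k → ℝ) : ℝ := Real.sqrt (∑ i, (v i) ^ 2)

/-- Euclidean norm of a full parameter vector. -/
def paramNorm {n L d : ℕ} (θ : Params n L d) : ℝ := Real.sqrt (∑ i, (θ i) ^ 2)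

/-- Spectral (operator) norm of a matrix. -/
def specNorm {m k : ℕ} (A : Matrix (Fin m) (Fin k) ℝ) : ℝ :=
  sSup ((fun v => l2norm (A.mulVec v)) '' {v | l2norm v ≤ 1})

/-- Smallest singular value of a matrix. -/
def singMin {m k : ℕ} (A : Matrix (Fin m) (Fin k) ℝ) : ℝ :=
  sInf ((fun v => l2norm (A.mulVec v)) '' {v | l2norm v = 1})

/-- Frobenius norm of a matrix. -/
def frobNorm {m k : ℕ} (A : Matrix (Fin m) (Fin k) ℝ) : ℝ :=
  Real.sqrt (∑ i, ∑ j, (A i j) ^ 2)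

/-- Layer activations x^{(ℓ)} of the ResNet. -/
def xvec {n L d : ℕ} (φ : ℝ → ℝ) (α σv σw : ℝ) (θ : Params n L d) (x : Fin d → ℝ) :
    ℕ → Fin n → ℝ
  | 0 => (Real.sqrt d)⁻¹ • (Umat θ).mulVec x
  | ℓ + 1 =>
      xvec φ α σv σw θ x ℓ +
        (α * σv / Real.sqrt n) • (Vmat θ (ℓ + 1)).mulVec
          (fun i => φ ((σw / Real.sqrt n) *
              (Wmat θ (ℓ + 1)).mulVec (xvec φ α σv σw θ x ℓ) i))

/-- Pre-activations g^{(ℓ)} of the ResNet (meaningful for ℓ = 1,…,L). -/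
def gvec {n L d : ℕ} (φ : ℝ → ℝ) (α σv σw : ℝ) (θ : Params n L d) (x : Fin d → ℝ)
    (ℓ : ℕ) : Fin n → ℝ :=
  (σw / Real.sqrt n) • (Wmat θ ℓ).mulVec (xvec φ α σv σw θ x (ℓ - 1))

/-- The ResNet output f(x;θ). -/
def fnet {n L d : ℕ} (φ : ℝ → ℝ) (α σv σw : ℝ) (θ : Params n L d) (x : Fin d → ℝ) : ℝ :=
  (σw / Real.sqrt n) * ∑ i, wOut θ i * xvec φ α σv σw θ x L i

/-- The i.i.d. standard Gaussian initialization measure on the parameters. -/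
def initMeasure (n L d : ℕ) : Measure (Params n L d) :=
  Measure.pi fun _ => gaussianReal 0 1

/-- Standard Gaussian on ℝ². -/
def stdGauss2 : Measure (ℝ × ℝ) := (gaussianReal 0 1).prod (gaussianReal 0 1)

/-- The centered bivariate Gaussian N(0,Σ) for Σ = [[K11,K12],[K12,K22]] positive
semidefinite, realized via the Cholesky factorization. -/
def biGauss (K11 K12 K22 : ℝ) : Measure (ℝ × ℝ) :=
  stdGauss2.map (fun z => (Real.sqrt K11 * z.1,
    (K12 / Real.sqrt K11) * z.1 + Real.sqrt (K22 - K12 ^ 2 / K11) * z.2))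

/-- T(Σ) = E_{(u,v)∼N(0,Σ)}[φ(u)φ(v)]. -/
def TT (φ : ℝ → ℝ) (K11 K12 K22 : ℝ) : ℝ :=
  ∫ uv, φ uv.1 * φ uv.2 ∂(biGauss K11 K12 K22)

/-- Ṫ(Σ) = E_{(u,v)∼N(0,Σ)}[φ'(u)φ'(v)]. -/
def TTdot (φ : ℝ → ℝ) (K11 K12 K22 : ℝ) : ℝ :=
  ∫ uv, deriv φ uv.1 * deriv φ uv.2 ∂(biGauss K11 K12 K22)

/-- The limiting GP kernels: `Kker … ℓ x y` is K^{(ℓ+1)}(x,y); in particular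
`Kker … 0 x y = K^{(1)}(x,y) = (σ_w²/d)·xᵀy` and `Kker … L x y = K^{(L+1)}(x,y)`. -/
def Kker (φ : ℝ → ℝ) (α σv σw : ℝ) {d : ℕ} : ℕ → (Fin d → ℝ) → (Fin d → ℝ) → ℝ
  | 0 => fun x y => σw ^ 2 / d * ∑ i, x i * y i
  | ℓ + 1 => fun x y =>
      Kker φ α σv σw ℓ x y + α ^ 2 * σv ^ 2 * σw ^ 2 *
        TT φ (Kker φ α σv σw ℓ x x) (Kker φ α σv σw ℓ x y) (Kker φ α σv σw ℓ y y)


/-- The spectral bounds on a parameter vector: ‖w^{(L+1)}‖₂ ≤ 2√n, ‖U‖ ≤ √d + 2√n, and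
‖W^{(ℓ)}‖, ‖V^{(ℓ)}‖ ≤ 3√n for ℓ = 1,…,L. -/
def SpectralBounds {n L d : ℕ} (θ : Params n L d) : Prop :=
  l2norm (wOut θ) ≤ 2 * Real.sqrt n ∧
  specNorm (Umat θ) ≤ Real.sqrt d + 2 * Real.sqrt n ∧
  ∀ ℓ : ℕ, 1 ≤ ℓ → ℓ ≤ L →
    specNorm (Wmat θ ℓ) ≤ 3 * Real.sqrt n ∧ specNorm (Vmat θ ℓ) ≤ 3 * Real.sqrt n

/-- Auxiliary downward recursion: `deltaAux … k` is δ^{(L−k)}, with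
δ^{(L)} = (σ_w/√n)·w^{(L+1)} and
δ^{(ℓ)} = (I + α(σ_w/√n)W^{(ℓ+1)ᵀ}·diag{φ'(g^{(ℓ+1)})}·(σ_v/√n)V^{(ℓ+1)ᵀ})·δ^{(ℓ+1)}. -/
def deltaAux {n L d : ℕ} (φ : ℝ → ℝ) (α σv σw : ℝ) (θ : Params n L d) (x : Fin d → ℝ) :
    ℕ → Fin n → ℝ
  | 0 => (σw / Real.sqrt n) • wOut θ
  | k + 1 =>
      deltaAux φ α σv σw θ x k +
        (α * σw * σv / (n : ℝ)) •
          ((Wmat θ (L - k)).transpose *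
              Matrix.diagonal (fun i => deriv φ (gvec φ α σv σw θ x (L - k) i)) *
              (Vmat θ (L - k)).transpose).mulVec (deltaAux φ α σv σw θ x k)

/-- δ^{(ℓ)} = ∇_{x^{(ℓ)}} f, for ℓ = 0,…,L. -/
def deltaVec {n L d : ℕ} (φ : ℝ → ℝ) (α σv σw : ℝ) (θ : Params n L d) (x : Fin d → ℝ)
    (ℓ : ℕ) : Fin n → ℝ :=
  deltaAux φ α σv σw θ x (L - ℓ)

section AuxLemmas

open Finset

variable {k m p : ℕ}

lemma l2norm_nonneg (v : Fin k → ℝ) : 0 ≤ l2norm v := Real.sqrt_nonneg _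

lemma l2norm_sq (v : Fin k → ℝ) : l2norm v ^ 2 = ∑ i, v i ^ 2 :=
  Real.sq_sqrt (Finset.sum_nonneg fun i _ => sq_nonneg _)

lemma l2norm_le_of_sq_le {v : Fin k → ℝ} {c : ℝ} (hc : 0 ≤ c)
    (h : ∑ i, v i ^ 2 ≤ c ^ 2) : l2norm v ≤ c := by
  rw [l2norm, show c = Real.sqrt (c ^ 2) by rw [Real.sqrt_sq hc]]
  exact Real.sqrt_le_sqrt h

lemma sq_le_of_l2norm_le {v : Fin k → ℝ} {c : ℝ} (h : l2norm v ≤ c) :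
    ∑ i, v i ^ 2 ≤ c ^ 2 := by
  rw [← l2norm_sq]
  exact pow_le_pow_left₀ (l2norm_nonneg v) h 2

lemma l2norm_zero : l2norm (0 : Fin k → ℝ) = 0 := by simp [l2norm]

lemma l2norm_smul (c : ℝ) (v : Fin k → ℝ) : l2norm (c • v) = |c| * l2norm v := by
  simp only [l2norm, Pi.smul_apply, smul_eq_mul, mul_pow, ← Finset.mul_sum]
  rw [Real.sqrt_mul (sq_nonneg c), Real.sqrt_sq_eq_abs]

lemma l2norm_add_le (u v : Fin k → ℝ) : l2norm (u + v) ≤ l2norm u + l2norm v := by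
  have h := Real.sum_mul_le_sqrt_mul_sqrt Finset.univ u v
  apply l2norm_le_of_sq_le (add_nonneg (l2norm_nonneg u) (l2norm_nonneg v))
  have : ∀ i : Fin k, (u i + v i) ^ 2 = u i ^ 2 + 2 * (u i * v i) + v i ^ 2 := fun i => by ring
  calc ∑ i, (u i + v i) ^ 2 = ∑ i, u i ^ 2 + 2 * (∑ i, u i * v i) + ∑ i, v i ^ 2 := by
        simp_rw [this]; rw [Finset.sum_add_distrib, Finset.sum_add_distrib, Finset.mul_sum]
    _ ≤ ∑ i, u i ^ 2 + 2 * (Real.sqrt (∑ i, u i ^ 2) * Real.sqrt (∑ i, v i ^ 2)) + ∑ i, v i ^ 2 := by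
        nlinarith [h]
    _ = (Real.sqrt (∑ i, u i ^ 2) + Real.sqrt (∑ i, v i ^ 2)) ^ 2 := by
        have hu : Real.sqrt (∑ i, u i ^ 2) ^ 2 = ∑ i, u i ^ 2 :=
          Real.sq_sqrt (Finset.sum_nonneg fun i _ => sq_nonneg (u i))
        have hv : Real.sqrt (∑ i, v i ^ 2) ^ 2 = ∑ i, v i ^ 2 :=
          Real.sq_sqrt (Finset.sum_nonneg fun i _ => sq_nonneg (v i))
        nlinarith [hu, hv]

lemma cauchy_schwarz (u v : Fin k → ℝ) : ∑ i, u i * v i ≤ l2norm u * l2norm v :=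
  Real.sum_mul_le_sqrt_mul_sqrt Finset.univ u v

lemma l2norm_eq_zero {v : Fin k → ℝ} (h : l2norm v = 0) : v = 0 := by
  funext i
  have h2 : ∑ j, v j ^ 2 = 0 := by
    have := l2norm_sq v; rw [h] at this; simpa using this.symm
  have := (Finset.sum_eq_zero_iff_of_nonneg (fun j _ => sq_nonneg (v j))).1 h2 i (Finset.mem_univ i)
  exact pow_eq_zero_iff (by norm_num) |>.1 this

end AuxLemmas
section MatLemmas

variable {k m p : ℕ}

lemma frobNorm_nonneg (A : Matrix (Fin m) (Fin k) ℝ) : 0 ≤ frobNorm A := Real.sqrt_nonneg _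

lemma frob_mulVec_le (A : Matrix (Fin m) (Fin k) ℝ) (v : Fin k → ℝ) :
    l2norm (A.mulVec v) ≤ frobNorm A * l2norm v := by
  apply l2norm_le_of_sq_le (mul_nonneg (frobNorm_nonneg A) (l2norm_nonneg v))
  have hpt : ∀ i, (A.mulVec v i) ^ 2 ≤ (∑ j, A i j ^ 2) * ∑ j, v j ^ 2 := fun i => by
    simpa [Matrix.mulVec, dotProduct] using Finset.sum_mul_sq_le_sq_mul_sq Finset.univ (A i) v
  calc ∑ i, (A.mulVec v i) ^ 2 ≤ ∑ i, (∑ j, A i j ^ 2) * ∑ j, v j ^ 2 :=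
        Finset.sum_le_sum fun i _ => hpt i
    _ = (∑ i, ∑ j, A i j ^ 2) * ∑ j, v j ^ 2 := by rw [Finset.sum_mul]
    _ = (frobNorm A * l2norm v) ^ 2 := by
        rw [mul_pow, l2norm_sq, frobNorm, Real.sq_sqrt (by positivity)]

lemma specSet_bddAbove (A : Matrix (Fin m) (Fin k) ℝ) :
    BddAbove ((fun v => l2norm (A.mulVec v)) '' {v | l2norm v ≤ 1}) := by
  refine ⟨frobNorm A, fun y hy => ?_⟩
  obtain ⟨v, hv, rfl⟩ := hy
  calc l2norm (A.mulVec v) ≤ frobNorm A * l2norm v := frob_mulVec_le A v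
    _ ≤ frobNorm A * 1 := mul_le_mul_of_nonneg_left hv (frobNorm_nonneg A)
    _ = frobNorm A := mul_one _

lemma specNorm_nonneg (A : Matrix (Fin m) (Fin k) ℝ) : 0 ≤ specNorm A := by
  calc (0:ℝ) = l2norm (A.mulVec (0 : Fin k → ℝ)) := by simp [l2norm_zero]
    _ ≤ specNorm A := le_csSup (specSet_bddAbove A)
        (Set.mem_image_of_mem _ (by simp [Set.mem_setOf_eq, l2norm_zero]))

lemma specNorm_le_frobNorm (A : Matrix (Fin m) (Fin k) ℝ) : specNorm A ≤ frobNorm A := by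
  rw [specNorm]
  refine csSup_le ⟨_, Set.mem_image_of_mem (fun v => l2norm (A.mulVec v))
    (show (0 : Fin k → ℝ) ∈ {v | l2norm v ≤ 1} by simp [Set.mem_setOf_eq, l2norm_zero])⟩ ?_
  rintro y ⟨v, hv, rfl⟩
  calc l2norm (A.mulVec v) ≤ frobNorm A * l2norm v := frob_mulVec_le A v
    _ ≤ frobNorm A * 1 := mul_le_mul_of_nonneg_left hv (frobNorm_nonneg A)
    _ = frobNorm A := mul_one _

lemma spec_mulVec_le (A : Matrix (Fin m) (Fin k) ℝ) (v : Fin k → ℝ) :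
    l2norm (A.mulVec v) ≤ specNorm A * l2norm v := by
  rcases eq_or_ne (l2norm v) 0 with h0 | h0
  · simp [l2norm_eq_zero h0, Matrix.mulVec_zero, l2norm_zero]
  · have hpos : 0 < l2norm v := lt_of_le_of_ne (l2norm_nonneg v) (Ne.symm h0)
    set u : Fin k → ℝ := (l2norm v)⁻¹ • v with hu
    have hu1 : l2norm u = 1 := by
      rw [hu, l2norm_smul, abs_of_pos (inv_pos.2 hpos), inv_mul_cancel₀ h0]
    have hmem : l2norm (A.mulVec u) ∈ (fun v => l2norm (A.mulVec v)) '' {v | l2norm v ≤ 1} :=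
      ⟨u, le_of_eq hu1, rfl⟩
    have hle : l2norm (A.mulVec u) ≤ specNorm A := le_csSup (specSet_bddAbove A) hmem
    rw [hu, Matrix.mulVec_smul, l2norm_smul, abs_of_pos (inv_pos.2 hpos)] at hle
    calc l2norm (A.mulVec v) = l2norm v * ((l2norm v)⁻¹ * l2norm (A.mulVec v)) := by
          field_simp
      _ ≤ l2norm v * specNorm A := mul_le_mul_of_nonneg_left hle (le_of_lt hpos)
      _ = specNorm A * l2norm v := mul_comm _ _

lemma spec_transpose_mulVec_le (A : Matrix (Fin m) (Fin k) ℝ) (v : Fin m → ℝ) :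
    l2norm (A.transpose.mulVec v) ≤ specNorm A * l2norm v := by
  set w : Fin k → ℝ := A.transpose.mulVec v with hw
  have key : l2norm w ^ 2 ≤ l2norm v * (specNorm A * l2norm w) := by
    calc l2norm w ^ 2 = ∑ i, w i ^ 2 := l2norm_sq w
      _ = ∑ i, (∑ j, A j i * v j) * w i := by
          apply Finset.sum_congr rfl; intro i _
          simp only [hw, pow_two, Matrix.mulVec, dotProduct, Matrix.transpose_apply]
      _ = ∑ j, v j * (A.mulVec w) j := by
          simp_rw [Finset.sum_mul, Matrix.mulVec, dotProduct, Finset.mul_sum]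
          rw [Finset.sum_comm]
          apply Finset.sum_congr rfl; intro j _
          apply Finset.sum_congr rfl; intro i _
          ring
      _ ≤ l2norm v * l2norm (A.mulVec w) := cauchy_schwarz v _
      _ ≤ l2norm v * (specNorm A * l2norm w) :=
          mul_le_mul_of_nonneg_left (spec_mulVec_le A w) (l2norm_nonneg v)
  rcases eq_or_ne (l2norm w) 0 with h0 | h0
  · rw [h0]; exact mul_nonneg (specNorm_nonneg A) (l2norm_nonneg v)
  · have hpos : 0 < l2norm w := lt_of_le_of_ne (l2norm_nonneg w) (Ne.symm h0)
    nlinarith [key]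

lemma specNorm_zero : specNorm (0 : Matrix (Fin m) (Fin k) ℝ) = 0 :=
  le_antisymm (by simpa [frobNorm] using specNorm_le_frobNorm (0 : Matrix (Fin m) (Fin k) ℝ))
    (specNorm_nonneg _)

lemma diag_mulVec_le (a v : Fin m → ℝ) {c : ℝ} (hc : 0 ≤ c) (h : ∀ i, |a i| ≤ c) :
    l2norm ((Matrix.diagonal a).mulVec v) ≤ c * l2norm v := by
  apply l2norm_le_of_sq_le (mul_nonneg hc (l2norm_nonneg v))
  have : ∀ i, ((Matrix.diagonal a).mulVec v i) ^ 2 ≤ c ^ 2 * v i ^ 2 := fun i => by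
    rw [Matrix.mulVec_diagonal]
    calc (a i * v i) ^ 2 = a i ^ 2 * v i ^ 2 := by ring
      _ ≤ c ^ 2 * v i ^ 2 := by
          apply mul_le_mul_of_nonneg_right _ (sq_nonneg _)
          calc a i ^ 2 = |a i| ^ 2 := (sq_abs _).symm
            _ ≤ c ^ 2 := pow_le_pow_left₀ (abs_nonneg _) (h i) 2
  calc ∑ i, ((Matrix.diagonal a).mulVec v i) ^ 2 ≤ ∑ i, c ^ 2 * v i ^ 2 :=
        Finset.sum_le_sum fun i _ => this i
    _ = c ^ 2 * ∑ i, v i ^ 2 := by rw [Finset.mul_sum]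
    _ = (c * l2norm v) ^ 2 := by rw [mul_pow, l2norm_sq]

lemma diag_mulVec_le' (a v : Fin m → ℝ) :
    l2norm ((Matrix.diagonal a).mulVec v) ≤ l2norm a * l2norm v := by
  apply l2norm_le_of_sq_le (mul_nonneg (l2norm_nonneg a) (l2norm_nonneg v))
  have : ∀ i : Fin m, ((Matrix.diagonal a).mulVec v i) ^ 2 = a i ^ 2 * v i ^ 2 := fun i => by
    rw [Matrix.mulVec_diagonal]; ring
  calc ∑ i, ((Matrix.diagonal a).mulVec v i) ^ 2 = ∑ i, a i ^ 2 * v i ^ 2 :=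
        Finset.sum_congr rfl fun i _ => this i
    _ ≤ ∑ i, a i ^ 2 * ∑ j, v j ^ 2 := by
        apply Finset.sum_le_sum; intro i _
        exact mul_le_mul_of_nonneg_left
          (Finset.single_le_sum (fun j _ => sq_nonneg (v j)) (Finset.mem_univ i)) (sq_nonneg _)
    _ = (∑ i, a i ^ 2) * ∑ j, v j ^ 2 := (Finset.sum_mul _ _ _).symm
    _ = (l2norm a * l2norm v) ^ 2 := by rw [mul_pow, l2norm_sq, l2norm_sq]

end MatLemmas
section ParamLemmas

variable {n L d : ℕ} {k : ℕ}

lemma paramNorm_nonneg (θ : Params n L d) : 0 ≤ paramNorm θ := Real.sqrt_nonneg _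

lemma paramNorm_sq (θ : Params n L d) : paramNorm θ ^ 2 = ∑ q, θ q ^ 2 :=
  Real.sq_sqrt (Finset.sum_nonneg fun q _ => sq_nonneg _)

lemma sum_sq_comp_le {ι : Type*} [Fintype ι] (e : ι → ParamIdx n L d)
    (he : Function.Injective e) (η : Params n L d) :
    ∑ i, η (e i) ^ 2 ≤ ∑ q, η q ^ 2 := by
  calc ∑ i, η (e i) ^ 2 = ∑ q ∈ Finset.univ.image e, η q ^ 2 :=
        (Finset.sum_image (f := fun q => η q ^ 2) fun x _ y _ h => he h).symm
    _ ≤ ∑ q, η q ^ 2 :=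
        Finset.sum_le_sum_of_subset_of_nonneg (Finset.subset_univ _) fun q _ _ => sq_nonneg _

lemma wOut_sub_le (θ θ' : Params n L d) :
    l2norm (wOut θ - wOut θ') ≤ paramNorm (θ - θ') := by
  apply l2norm_le_of_sq_le (paramNorm_nonneg _)
  rw [paramNorm_sq]
  exact sum_sq_comp_le Sum.inl Sum.inl_injective (θ - θ')

lemma Wmat_sub_frob_le (θ θ' : Params n L d) (ℓ : ℕ) :
    frobNorm (Wmat θ ℓ - Wmat θ' ℓ) ≤ paramNorm (θ - θ') := by
  by_cases h : 1 ≤ ℓ ∧ ℓ ≤ L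
  · have he : Function.Injective (fun p : Fin n × Fin n =>
        (Sum.inr (Sum.inl (⟨ℓ - 1, by omega⟩, p.1, p.2)) : ParamIdx n L d)) := by
      intro a b hab
      simp only [Sum.inr.injEq, Sum.inl.injEq, Prod.mk.injEq] at hab
      exact Prod.ext hab.2.1 hab.2.2
    have hb := sum_sq_comp_le _ he (θ - θ')
    rw [frobNorm, paramNorm]
    apply Real.sqrt_le_sqrt
    calc ∑ i, ∑ j, ((Wmat θ ℓ - Wmat θ' ℓ) i j) ^ 2
        = ∑ p : Fin n × Fin n,
            ((θ - θ') (Sum.inr (Sum.inl (⟨ℓ - 1, by omega⟩, p.1, p.2)))) ^ 2 := by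
          rw [Fintype.sum_prod_type]
          apply Finset.sum_congr rfl; intro i _
          apply Finset.sum_congr rfl; intro j _
          simp [Wmat, dif_pos h, Matrix.sub_apply]
      _ ≤ ∑ q, (θ - θ') q ^ 2 := hb
  · rw [Wmat, Wmat, dif_neg h, dif_neg h, sub_self]
    calc frobNorm (0 : Matrix (Fin n) (Fin n) ℝ) = 0 := by simp [frobNorm]
      _ ≤ paramNorm (θ - θ') := paramNorm_nonneg _

lemma Vmat_sub_frob_le (θ θ' : Params n L d) (ℓ : ℕ) :
    frobNorm (Vmat θ ℓ - Vmat θ' ℓ) ≤ paramNorm (θ - θ') := by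
  by_cases h : 1 ≤ ℓ ∧ ℓ ≤ L
  · have he : Function.Injective (fun p : Fin n × Fin n =>
        (Sum.inr (Sum.inr (Sum.inl (⟨ℓ - 1, by omega⟩, p.1, p.2))) : ParamIdx n L d)) := by
      intro a b hab
      simp only [Sum.inr.injEq, Sum.inl.injEq, Prod.mk.injEq] at hab
      exact Prod.ext hab.2.1 hab.2.2
    have hb := sum_sq_comp_le _ he (θ - θ')
    rw [frobNorm, paramNorm]
    apply Real.sqrt_le_sqrt
    calc ∑ i, ∑ j, ((Vmat θ ℓ - Vmat θ' ℓ) i j) ^ 2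
        = ∑ p : Fin n × Fin n,
            ((θ - θ') (Sum.inr (Sum.inr (Sum.inl (⟨ℓ - 1, by omega⟩, p.1, p.2))))) ^ 2 := by
          rw [Fintype.sum_prod_type]
          apply Finset.sum_congr rfl; intro i _
          apply Finset.sum_congr rfl; intro j _
          simp [Vmat, dif_pos h, Matrix.sub_apply]
      _ ≤ ∑ q, (θ - θ') q ^ 2 := hb
  · rw [Vmat, Vmat, dif_neg h, dif_neg h, sub_self]
    calc frobNorm (0 : Matrix (Fin n) (Fin n) ℝ) = 0 := by simp [frobNorm]
      _ ≤ paramNorm (θ - θ') := paramNorm_nonneg _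

lemma Umat_sub_frob_le (θ θ' : Params n L d) :
    frobNorm (Umat θ - Umat θ') ≤ paramNorm (θ - θ') := by
  have he : Function.Injective (fun p : Fin n × Fin d =>
      (Sum.inr (Sum.inr (Sum.inr (p.1, p.2))) : ParamIdx n L d)) := by
    intro a b hab
    simp only [Sum.inr.injEq, Prod.mk.injEq] at hab
    exact Prod.ext hab.1 hab.2
  have hb := sum_sq_comp_le _ he (θ - θ')
  rw [frobNorm, paramNorm]
  apply Real.sqrt_le_sqrt
  calc ∑ i, ∑ j, ((Umat θ - Umat θ') i j) ^ 2
      = ∑ p : Fin n × Fin d, ((θ - θ') (Sum.inr (Sum.inr (Sum.inr (p.1, p.2))))) ^ 2 := by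
        rw [Fintype.sum_prod_type]
        apply Finset.sum_congr rfl; intro i _
        apply Finset.sum_congr rfl; intro j _
        simp [Umat, Matrix.sub_apply]
    _ ≤ ∑ q, (θ - θ') q ^ 2 := hb

lemma specW_all {θ : Params n L d} (hθ : SpectralBounds θ) (ℓ : ℕ) :
    specNorm (Wmat θ ℓ) ≤ 3 * Real.sqrt n := by
  by_cases h : 1 ≤ ℓ ∧ ℓ ≤ L
  · exact (hθ.2.2 ℓ h.1 h.2).1
  · rw [Wmat, dif_neg h, specNorm_zero]; positivity

lemma specV_all {θ : Params n L d} (hθ : SpectralBounds θ) (ℓ : ℕ) :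
    specNorm (Vmat θ ℓ) ≤ 3 * Real.sqrt n := by
  by_cases h : 1 ≤ ℓ ∧ ℓ ≤ L
  · exact (hθ.2.2 ℓ h.1 h.2).2
  · rw [Vmat, dif_neg h, specNorm_zero]; positivity

lemma l2norm_comp_bound {φ : ℝ → ℝ} {C : ℝ} (hC : 0 ≤ C) (h : ∀ z, |φ z| ≤ C * |z|)
    (u : Fin k → ℝ) : l2norm (fun i => φ (u i)) ≤ C * l2norm u := by
  apply l2norm_le_of_sq_le (mul_nonneg hC (l2norm_nonneg u))
  have hpt : ∀ i, φ (u i) ^ 2 ≤ C ^ 2 * u i ^ 2 := fun i => by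
    have h2 : |φ (u i)| ^ 2 ≤ (C * |u i|) ^ 2 :=
      pow_le_pow_left₀ (abs_nonneg _) (h (u i)) 2
    simpa [sq_abs, mul_pow] using h2
  calc ∑ i, φ (u i) ^ 2 ≤ ∑ i, C ^ 2 * u i ^ 2 := Finset.sum_le_sum fun i _ => hpt i
    _ = C ^ 2 * ∑ i, u i ^ 2 := by rw [Finset.mul_sum]
    _ = (C * l2norm u) ^ 2 := by rw [mul_pow, l2norm_sq]

lemma l2norm_comp_lip {φ : ℝ → ℝ} {C : ℝ} (hC : 0 ≤ C)
    (h : ∀ z z', |φ z - φ z'| ≤ C * |z - z'|) (u u' : Fin k → ℝ) :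
    l2norm (fun i => φ (u i) - φ (u' i)) ≤ C * l2norm (u - u') := by
  apply l2norm_le_of_sq_le (mul_nonneg hC (l2norm_nonneg _))
  have hpt : ∀ i, (φ (u i) - φ (u' i)) ^ 2 ≤ C ^ 2 * (u i - u' i) ^ 2 := fun i => by
    have h2 : |φ (u i) - φ (u' i)| ^ 2 ≤ (C * |u i - u' i|) ^ 2 :=
      pow_le_pow_left₀ (abs_nonneg _) (h (u i) (u' i)) 2
    simpa [sq_abs, mul_pow] using h2
  calc ∑ i, (φ (u i) - φ (u' i)) ^ 2 ≤ ∑ i, C ^ 2 * (u i - u' i) ^ 2 :=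
        Finset.sum_le_sum fun i _ => hpt i
    _ = C ^ 2 * ∑ i, (u i - u' i) ^ 2 := by rw [Finset.mul_sum]
    _ = (C * l2norm (u - u')) ^ 2 := by
        rw [mul_pow, l2norm_sq]; rfl

end ParamLemmas
section ForwardAux

variable {n L d : ℕ}

lemma sqrt_ge_one {n : ℕ} (hn : 1 ≤ n) : (1:ℝ) ≤ Real.sqrt n := by
  rw [show (1:ℝ) = Real.sqrt 1 by rw [Real.sqrt_one]]
  exact Real.sqrt_le_sqrt (by exact_mod_cast hn)

lemma xvec_bound (φ : ℝ → ℝ) (α σv σw Cφ B : ℝ) (x : Fin d → ℝ) (θ : Params n L d)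
    (hn : 1 ≤ n) (hd : 1 ≤ d) (hα : 0 < α) (hσv : 0 < σv) (hσw : 0 < σw)
    (hCφ : 0 < Cφ) (hB : 0 ≤ B) (hφ : ∀ z, |φ z| ≤ Cφ * |z|) (hx : l2norm x ≤ B)
    (hθ : SpectralBounds θ) :
    ∀ ℓ, l2norm (xvec φ α σv σw θ x ℓ) ≤
      3 * B * (1 + 9 * α * σv * σw * Cφ) ^ ℓ * Real.sqrt n := by
  have hsn : (1:ℝ) ≤ Real.sqrt n := sqrt_ge_one hn
  have hsn0 : (0:ℝ) < Real.sqrt n := lt_of_lt_of_le one_pos hsn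
  have hsd : (1:ℝ) ≤ Real.sqrt d := sqrt_ge_one hd
  have hsd0 : (0:ℝ) < Real.sqrt d := lt_of_lt_of_le one_pos hsd
  have hr1 : (1:ℝ) ≤ 1 + 9 * α * σv * σw * Cφ := by
    nlinarith [mul_pos (mul_pos (mul_pos hα hσv) hσw) hCφ]
  have hr0 : (0:ℝ) < 1 + 9 * α * σv * σw * Cφ := lt_of_lt_of_le one_pos hr1
  intro ℓ
  induction ℓ with
  | zero =>
      have h1 : l2norm (xvec φ α σv σw θ x 0) =
          (Real.sqrt d)⁻¹ * l2norm ((Umat θ).mulVec x) := by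
        show l2norm ((Real.sqrt d)⁻¹ • (Umat θ).mulVec x) = _
        rw [l2norm_smul, abs_of_pos (inv_pos.2 hsd0)]
      have h2 : l2norm ((Umat θ).mulVec x) ≤ (Real.sqrt d + 2 * Real.sqrt n) * B :=
        le_trans (spec_mulVec_le _ _)
          (mul_le_mul hθ.2.1 hx (l2norm_nonneg _) (by positivity))
      rw [h1, pow_zero, mul_one]
      have hinvd : (Real.sqrt d)⁻¹ * Real.sqrt d = 1 := inv_mul_cancel₀ (ne_of_gt hsd0)
      have hinv1 : (Real.sqrt d)⁻¹ ≤ 1 := by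
        nlinarith [inv_pos.2 hsd0]
      calc (Real.sqrt d)⁻¹ * l2norm ((Umat θ).mulVec x)
          ≤ (Real.sqrt d)⁻¹ * ((Real.sqrt d + 2 * Real.sqrt n) * B) :=
            mul_le_mul_of_nonneg_left h2 (by positivity)
        _ = B + 2 * B * Real.sqrt n * (Real.sqrt d)⁻¹ := by
            field_simp
        _ ≤ 3 * B * Real.sqrt n := by
            nlinarith [mul_nonneg hB (sub_nonneg.2 hsn),
              mul_nonneg (mul_nonneg hB hsn0.le) (sub_nonneg.2 hinv1)]
  | succ ℓ ih =>
      set r : ℝ := 1 + 9 * α * σv * σw * Cφ with hrdef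
      set xl : Fin n → ℝ := xvec φ α σv σw θ x ℓ with hxl
      set w : Fin n → ℝ := (Wmat θ (ℓ+1)).mulVec xl with hw
      have hWx : l2norm w ≤ 3 * Real.sqrt n * l2norm xl :=
        le_trans (spec_mulVec_le _ _)
          (mul_le_mul_of_nonneg_right (specW_all hθ _) (l2norm_nonneg _))
      have hu : l2norm (fun i => (σw / Real.sqrt n) * w i) = (σw / Real.sqrt n) * l2norm w := by
        have heq : (fun i => (σw / Real.sqrt n) * w i) = (σw / Real.sqrt n) • w := rfl
        rw [heq, l2norm_smul, abs_of_pos (by positivity)]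
      have hφu : l2norm (fun i => φ ((σw / Real.sqrt n) * w i)) ≤
          Cφ * ((σw / Real.sqrt n) * l2norm w) := by
        calc l2norm (fun i => φ ((σw / Real.sqrt n) * w i)) ≤
            Cφ * l2norm (fun i => (σw / Real.sqrt n) * w i) :=
              l2norm_comp_bound hCφ.le hφ _
          _ = Cφ * ((σw / Real.sqrt n) * l2norm w) := by rw [hu]
      have hV2 : l2norm ((Vmat θ (ℓ+1)).mulVec (fun i => φ ((σw / Real.sqrt n) * w i))) ≤
          3 * Real.sqrt n * (Cφ * ((σw / Real.sqrt n) * (3 * Real.sqrt n * l2norm xl))) := by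
        calc l2norm ((Vmat θ (ℓ+1)).mulVec (fun i => φ ((σw / Real.sqrt n) * w i)))
            ≤ specNorm (Vmat θ (ℓ+1)) * l2norm (fun i => φ ((σw / Real.sqrt n) * w i)) :=
              spec_mulVec_le _ _
          _ ≤ 3 * Real.sqrt n * (Cφ * ((σw / Real.sqrt n) * l2norm w)) :=
              mul_le_mul (specV_all hθ _) hφu (l2norm_nonneg _) (by positivity)
          _ ≤ 3 * Real.sqrt n * (Cφ * ((σw / Real.sqrt n) * (3 * Real.sqrt n * l2norm xl))) := by
              apply mul_le_mul_of_nonneg_left _ (by positivity)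
              apply mul_le_mul_of_nonneg_left _ hCφ.le
              exact mul_le_mul_of_nonneg_left hWx (by positivity)
      have hstep : l2norm (xvec φ α σv σw θ x (ℓ+1)) ≤
          l2norm xl + (α * σv / Real.sqrt n) *
            (3 * Real.sqrt n * (Cφ * ((σw / Real.sqrt n) * (3 * Real.sqrt n * l2norm xl)))) := by
        have hxs : xvec φ α σv σw θ x (ℓ+1) = xl + (α * σv / Real.sqrt n) •
            (Vmat θ (ℓ+1)).mulVec (fun i => φ ((σw / Real.sqrt n) * w i)) := rfl
        rw [hxs]
        refine le_trans (l2norm_add_le _ _) ?_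
        rw [l2norm_smul, abs_of_pos (show (0:ℝ) < α * σv / Real.sqrt n by positivity)]
        exact add_le_add_right (mul_le_mul_of_nonneg_left hV2 (by positivity)) _
      have hsimp : (α * σv / Real.sqrt n) *
          (3 * Real.sqrt n * (Cφ * ((σw / Real.sqrt n) * (3 * Real.sqrt n * l2norm xl)))) =
          9 * α * σv * σw * Cφ * l2norm xl := by
        have hnn : Real.sqrt n * Real.sqrt n = (n:ℝ) := Real.mul_self_sqrt (by positivity)
        field_simp
        ring
      rw [hsimp] at hstep
      calc l2norm (xvec φ α σv σw θ x (ℓ+1)) ≤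
            l2norm xl + 9 * α * σv * σw * Cφ * l2norm xl := hstep
        _ = r * l2norm xl := by rw [hrdef]; ring
        _ ≤ r * (3 * B * r ^ ℓ * Real.sqrt n) := mul_le_mul_of_nonneg_left ih (le_of_lt hr0)
        _ = 3 * B * r ^ (ℓ+1) * Real.sqrt n := by ring

end ForwardAux
section ForwardLip

variable {n L d : ℕ}

lemma xvec_lip (φ : ℝ → ℝ) (α σv σw Cφ B : ℝ) (x : Fin d → ℝ) (θ θ' : Params n L d)
    (hn : 1 ≤ n) (hd : 1 ≤ d) (hα : 0 < α) (hσv : 0 < σv) (hσw : 0 < σw)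
    (hCφ : 0 < Cφ) (hB : 0 ≤ B) (hφ : ∀ z, |φ z| ≤ Cφ * |z|)
    (hφl : ∀ z z', |φ z - φ z'| ≤ Cφ * |z - z'|) (hx : l2norm x ≤ B)
    (hθ : SpectralBounds θ) (hθ' : SpectralBounds θ') :
    ∀ ℓ, l2norm (xvec φ α σv σw θ x ℓ - xvec φ α σv σw θ' x ℓ) ≤
      (B + 18 * α * σv * σw * Cφ * B * ℓ) * (1 + 9 * α * σv * σw * Cφ) ^ ℓ *
        paramNorm (θ - θ') := by
  have hsn : (1:ℝ) ≤ Real.sqrt n := sqrt_ge_one hn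
  have hsn0 : (0:ℝ) < Real.sqrt n := lt_of_lt_of_le one_pos hsn
  have hsd : (1:ℝ) ≤ Real.sqrt d := sqrt_ge_one hd
  have hsd0 : (0:ℝ) < Real.sqrt d := lt_of_lt_of_le one_pos hsd
  have hr1 : (1:ℝ) ≤ 1 + 9 * α * σv * σw * Cφ := by
    nlinarith [mul_pos (mul_pos (mul_pos hα hσv) hσw) hCφ]
  have hr0 : (0:ℝ) < 1 + 9 * α * σv * σw * Cφ := lt_of_lt_of_le one_pos hr1
  have hP : 0 ≤ paramNorm (θ - θ') := paramNorm_nonneg _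
  have hc1 : 0 ≤ 18 * α * σv * σw * Cφ * B := by positivity
  intro ℓ
  induction ℓ with
  | zero =>
      have hid : xvec φ α σv σw θ x 0 - xvec φ α σv σw θ' x 0 =
          (Real.sqrt d)⁻¹ • ((Umat θ - Umat θ').mulVec x) := by
        show (Real.sqrt d)⁻¹ • (Umat θ).mulVec x - (Real.sqrt d)⁻¹ • (Umat θ').mulVec x = _
        rw [Matrix.sub_mulVec, smul_sub]
      rw [hid, l2norm_smul, abs_of_pos (inv_pos.2 hsd0)]
      have hinv1 : (Real.sqrt d)⁻¹ ≤ 1 := by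
        nlinarith [inv_pos.2 hsd0, inv_mul_cancel₀ (ne_of_gt hsd0)]
      have h2 : l2norm ((Umat θ - Umat θ').mulVec x) ≤ paramNorm (θ - θ') * B :=
        le_trans (frob_mulVec_le _ _)
          (mul_le_mul (Umat_sub_frob_le θ θ') hx (l2norm_nonneg _) hP)
      calc (Real.sqrt d)⁻¹ * l2norm ((Umat θ - Umat θ').mulVec x)
          ≤ 1 * (paramNorm (θ - θ') * B) :=
            mul_le_mul hinv1 h2 (l2norm_nonneg _) one_pos.le
        _ = (B + 18 * α * σv * σw * Cφ * B * (0:ℕ)) * (1 + 9 * α * σv * σw * Cφ) ^ 0 *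
            paramNorm (θ - θ') := by push_cast; ring
  | succ ℓ ih =>
      set r : ℝ := 1 + 9 * α * σv * σw * Cφ with hrdef
      set P : ℝ := paramNorm (θ - θ') with hPdef
      set S : ℝ := Real.sqrt n with hSdef
      set xl : Fin n → ℝ := xvec φ α σv σw θ x ℓ with hxl
      set xl' : Fin n → ℝ := xvec φ α σv σw θ' x ℓ with hxl'
      set Δ : ℝ := l2norm (xl - xl') with hΔ
      set u : Fin n → ℝ := fun i => (σw / S) * (Wmat θ (ℓ+1)).mulVec xl i with hu
      set u' : Fin n → ℝ := fun i => (σw / S) * (Wmat θ' (ℓ+1)).mulVec xl' i with hu'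
      have hXl : l2norm xl ≤ 3 * B * r ^ ℓ * S :=
        xvec_bound φ α σv σw Cφ B x θ hn hd hα hσv hσw hCφ hB hφ hx hθ ℓ
      -- bound on l2norm (u - u')
      have hudiff : u - u' = (σw / S) • ((Wmat θ (ℓ+1) - Wmat θ' (ℓ+1)).mulVec xl
          + (Wmat θ' (ℓ+1)).mulVec (xl - xl')) := by
        show (σw / S) • (Wmat θ (ℓ+1)).mulVec xl - (σw / S) • (Wmat θ' (ℓ+1)).mulVec xl' = _
        rw [Matrix.sub_mulVec, Matrix.mulVec_sub, smul_add, smul_sub, smul_sub]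
        abel
      have hgdiff : l2norm (u - u') ≤ (σw / S) * (P * (3 * B * r ^ ℓ * S) + 3 * S * Δ) := by
        rw [hudiff, l2norm_smul, abs_of_pos (by positivity : (0:ℝ) < σw / S)]
        apply mul_le_mul_of_nonneg_left _ (by positivity)
        refine le_trans (l2norm_add_le _ _) (add_le_add ?_ ?_)
        · exact le_trans (frob_mulVec_le _ _)
            (mul_le_mul (Wmat_sub_frob_le θ θ' (ℓ+1)) hXl (l2norm_nonneg _) hP)
        · exact le_trans (spec_mulVec_le _ _)
            (mul_le_mul_of_nonneg_right (specW_all hθ' _) (l2norm_nonneg _))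
      have hφdiff : l2norm (fun i => φ (u i) - φ (u' i)) ≤
          Cφ * ((σw / S) * (P * (3 * B * r ^ ℓ * S) + 3 * S * Δ)) :=
        le_trans (l2norm_comp_lip hCφ.le hφl u u')
          (mul_le_mul_of_nonneg_left hgdiff hCφ.le)
      -- bound on l2norm φu
      have hWx : l2norm ((Wmat θ (ℓ+1)).mulVec xl) ≤ 3 * S * (3 * B * r ^ ℓ * S) :=
        le_trans (spec_mulVec_le _ _)
          (mul_le_mul (specW_all hθ _) hXl (l2norm_nonneg _) (by positivity))
      have huB : l2norm u ≤ (σw / S) * (3 * S * (3 * B * r ^ ℓ * S)) := by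
        have heq : u = (σw / S) • (Wmat θ (ℓ+1)).mulVec xl := rfl
        rw [heq, l2norm_smul, abs_of_pos (by positivity : (0:ℝ) < σw / S)]
        exact mul_le_mul_of_nonneg_left hWx (by positivity)
      have hφu : l2norm (fun i => φ (u i)) ≤
          Cφ * ((σw / S) * (3 * S * (3 * B * r ^ ℓ * S))) :=
        le_trans (l2norm_comp_bound hCφ.le hφ u) (mul_le_mul_of_nonneg_left huB hCφ.le)
      -- decomposition identity for the step
      have hid : xvec φ α σv σw θ x (ℓ+1) - xvec φ α σv σw θ' x (ℓ+1) =
          (xl - xl') + (α * σv / S) •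
            ((Vmat θ (ℓ+1) - Vmat θ' (ℓ+1)).mulVec (fun i => φ (u i))
              + (Vmat θ' (ℓ+1)).mulVec ((fun i => φ (u i)) - (fun i => φ (u' i)))) := by
        show (xl + (α * σv / S) • (Vmat θ (ℓ+1)).mulVec (fun i => φ (u i)))
            - (xl' + (α * σv / S) • (Vmat θ' (ℓ+1)).mulVec (fun i => φ (u' i))) = _
        rw [Matrix.sub_mulVec, Matrix.mulVec_sub, smul_add, smul_sub, smul_sub]
        abel
      have hsub : ((fun i => φ (u i)) - (fun i => φ (u' i))) = fun i => φ (u i) - φ (u' i) := rfl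
      have hstep : l2norm (xvec φ α σv σw θ x (ℓ+1) - xvec φ α σv σw θ' x (ℓ+1)) ≤
          Δ + (α * σv / S) *
            (P * (Cφ * ((σw / S) * (3 * S * (3 * B * r ^ ℓ * S))))
              + 3 * S * (Cφ * ((σw / S) * (P * (3 * B * r ^ ℓ * S) + 3 * S * Δ)))) := by
        rw [hid]
        refine le_trans (l2norm_add_le _ _) (add_le_add_right ?_ Δ)
        rw [l2norm_smul, abs_of_pos (by positivity : (0:ℝ) < α * σv / S)]
        apply mul_le_mul_of_nonneg_left _ (by positivity)
        refine le_trans (l2norm_add_le _ _) (add_le_add ?_ ?_)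
        · exact le_trans (frob_mulVec_le _ _)
            (mul_le_mul (Vmat_sub_frob_le θ θ' (ℓ+1)) hφu (l2norm_nonneg _) hP)
        · rw [hsub]
          exact le_trans (spec_mulVec_le _ _)
            (mul_le_mul (specV_all hθ' _) hφdiff (l2norm_nonneg _) (by positivity))
      have hSne : S ≠ 0 := ne_of_gt hsn0
      have heq : Δ + (α * σv / S) *
          (P * (Cφ * ((σw / S) * (3 * S * (3 * B * r ^ ℓ * S))))
            + 3 * S * (Cφ * ((σw / S) * (P * (3 * B * r ^ ℓ * S) + 3 * S * Δ)))) =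
          r * Δ + 18 * α * σv * σw * Cφ * B * r ^ ℓ * P := by
        rw [hrdef]; field_simp; ring
      rw [heq] at hstep
      have hpow : (0:ℝ) ≤ r ^ ℓ := pow_nonneg hr0.le ℓ
      calc l2norm (xvec φ α σv σw θ x (ℓ+1) - xvec φ α σv σw θ' x (ℓ+1))
          ≤ r * Δ + 18 * α * σv * σw * Cφ * B * r ^ ℓ * P := hstep
        _ ≤ r * ((B + 18 * α * σv * σw * Cφ * B * ℓ) * r ^ ℓ * P)
            + 18 * α * σv * σw * Cφ * B * (r * r ^ ℓ) * P := by
            have h1 := mul_le_mul_of_nonneg_left ih hr0.le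
            have h2 : 18 * α * σv * σw * Cφ * B * r ^ ℓ * P ≤
                18 * α * σv * σw * Cφ * B * (r * r ^ ℓ) * P := by
              nlinarith [mul_nonneg (mul_nonneg hc1 hpow) hP]
            linarith
        _ = (B + 18 * α * σv * σw * Cφ * B * (ℓ+1:ℕ)) * r ^ (ℓ+1) * P := by
            push_cast; ring

end ForwardLip
section GvecLip

variable {n L d : ℕ}

lemma frobNorm_transpose {m k : ℕ} (A : Matrix (Fin m) (Fin k) ℝ) :
    frobNorm A.transpose = frobNorm A := by
  rw [frobNorm, frobNorm, Finset.sum_comm]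
  rfl

lemma gvec_lip (φ : ℝ → ℝ) (α σv σw Cφ B : ℝ) (x : Fin d → ℝ) (θ θ' : Params n L d)
    (hn : 1 ≤ n) (hd : 1 ≤ d) (hα : 0 < α) (hσv : 0 < σv) (hσw : 0 < σw)
    (hCφ : 0 < Cφ) (hB : 0 ≤ B) (hφ : ∀ z, |φ z| ≤ Cφ * |z|)
    (hφl : ∀ z z', |φ z - φ z'| ≤ Cφ * |z - z'|) (hx : l2norm x ≤ B)
    (hθ : SpectralBounds θ) (hθ' : SpectralBounds θ') :
    ∀ ℓ, ℓ ≤ L → l2norm (gvec φ α σv σw θ x ℓ - gvec φ α σv σw θ' x ℓ) ≤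
      (3 * σw * (2 * B + 18 * α * σv * σw * Cφ * B * L) *
        (1 + 9 * α * σv * σw * Cφ) ^ L) * paramNorm (θ - θ') := by
  have hsn : (1:ℝ) ≤ Real.sqrt n := sqrt_ge_one hn
  have hsn0 : (0:ℝ) < Real.sqrt n := lt_of_lt_of_le one_pos hsn
  have hr1 : (1:ℝ) ≤ 1 + 9 * α * σv * σw * Cφ := by
    nlinarith [mul_pos (mul_pos (mul_pos hα hσv) hσw) hCφ]
  have hr0 : (0:ℝ) < 1 + 9 * α * σv * σw * Cφ := lt_of_lt_of_le one_pos hr1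
  have hP : 0 ≤ paramNorm (θ - θ') := paramNorm_nonneg _
  have hc1 : 0 ≤ 18 * α * σv * σw * Cφ * B := by positivity
  intro ℓ hℓ
  set r : ℝ := 1 + 9 * α * σv * σw * Cφ with hrdef
  set P : ℝ := paramNorm (θ - θ') with hPdef
  set S : ℝ := Real.sqrt n with hSdef
  rcases Nat.eq_zero_or_pos ℓ with h0 | hpos
  · subst h0
    have hW0 : Wmat θ 0 = 0 := by rw [Wmat, dif_neg]; omega
    have hW0' : Wmat θ' 0 = 0 := by rw [Wmat, dif_neg]; omega
    have : gvec φ α σv σw θ x 0 - gvec φ α σv σw θ' x 0 = 0 := by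
      rw [gvec, gvec, hW0, hW0', Matrix.zero_mulVec, Matrix.zero_mulVec, smul_zero, sub_self]
    rw [this, l2norm_zero]
    positivity
  · obtain ⟨m, rfl⟩ : ∃ m, ℓ = m + 1 := ⟨ℓ - 1, by omega⟩
    have hmL : m ≤ L - 1 := by omega
    have hXl : l2norm (xvec φ α σv σw θ x m) ≤ 3 * B * r ^ m * S :=
      xvec_bound φ α σv σw Cφ B x θ hn hd hα hσv hσw hCφ hB hφ hx hθ m
    have hΔx : l2norm (xvec φ α σv σw θ x m - xvec φ α σv σw θ' x m) ≤
        (B + 18 * α * σv * σw * Cφ * B * m) * r ^ m * P :=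
      xvec_lip φ α σv σw Cφ B x θ θ' hn hd hα hσv hσw hCφ hB hφ hφl hx hθ hθ' m
    have hid : gvec φ α σv σw θ x (m+1) - gvec φ α σv σw θ' x (m+1) =
        (σw / S) • ((Wmat θ (m+1) - Wmat θ' (m+1)).mulVec (xvec φ α σv σw θ x m)
          + (Wmat θ' (m+1)).mulVec
            (xvec φ α σv σw θ x m - xvec φ α σv σw θ' x m)) := by
      rw [gvec, gvec]
      simp only [Nat.add_sub_cancel]
      rw [Matrix.sub_mulVec, Matrix.mulVec_sub, smul_add, smul_sub, smul_sub]
      abel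
    rw [hid, l2norm_smul, abs_of_pos (by positivity : (0:ℝ) < σw / S)]
    have hbound : l2norm ((Wmat θ (m+1) - Wmat θ' (m+1)).mulVec (xvec φ α σv σw θ x m)
        + (Wmat θ' (m+1)).mulVec (xvec φ α σv σw θ x m - xvec φ α σv σw θ' x m)) ≤
        P * (3 * B * r ^ m * S) +
          3 * S * ((B + 18 * α * σv * σw * Cφ * B * m) * r ^ m * P) := by
      refine le_trans (l2norm_add_le _ _) (add_le_add ?_ ?_)
      · exact le_trans (frob_mulVec_le _ _)
          (mul_le_mul (Wmat_sub_frob_le θ θ' (m+1)) hXl (l2norm_nonneg _) hP)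
      · exact le_trans (spec_mulVec_le _ _)
          (mul_le_mul (specW_all hθ' _) hΔx (l2norm_nonneg _) (by positivity))
    refine le_trans (mul_le_mul_of_nonneg_left hbound (by positivity)) ?_
    have hSle : (σw / S) * (P * (3 * B * r ^ m * S) +
        3 * S * ((B + 18 * α * σv * σw * Cφ * B * m) * r ^ m * P)) =
        3 * σw * (2 * B + 18 * α * σv * σw * Cφ * B * m) * r ^ m * P := by
      field_simp; ring
    rw [hSle]
    have hrm : r ^ m ≤ r ^ L := pow_le_pow_right₀ hr1 (by omega)
    have hm : (m:ℝ) ≤ (L:ℝ) := by exact_mod_cast (by omega : m ≤ L)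
    have hfac : 3 * σw * (2 * B + 18 * α * σv * σw * Cφ * B * m) * r ^ m ≤
        3 * σw * (2 * B + 18 * α * σv * σw * Cφ * B * L) * r ^ L := by
      have h1 : 0 ≤ 2 * B + 18 * α * σv * σw * Cφ * B * m := by positivity
      have h2 : 2 * B + 18 * α * σv * σw * Cφ * B * (m:ℝ) ≤
          2 * B + 18 * α * σv * σw * Cφ * B * L := by nlinarith
      have h3 : (0:ℝ) ≤ r ^ m := pow_nonneg hr0.le m
      exact mul_le_mul (mul_le_mul_of_nonneg_left h2 (by positivity : (0:ℝ) ≤ 3 * σw)) hrm h3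
        (by positivity)
    exact mul_le_mul_of_nonneg_right hfac hP

lemma deltaAux_bound (φ : ℝ → ℝ) (α σv σw Cφ B : ℝ) (x : Fin d → ℝ) (θ : Params n L d)
    (hn : 1 ≤ n) (hα : 0 < α) (hσv : 0 < σv) (hσw : 0 < σw) (hCφ : 0 < Cφ)
    (hφ' : ∀ z, |deriv φ z| ≤ Cφ) (hθ : SpectralBounds θ) :
    ∀ k, l2norm (deltaAux φ α σv σw θ x k) ≤
      2 * σw * (1 + 9 * α * σv * σw * Cφ) ^ k := by
  have hsn : (1:ℝ) ≤ Real.sqrt n := sqrt_ge_one hn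
  have hsn0 : (0:ℝ) < Real.sqrt n := lt_of_lt_of_le one_pos hsn
  have hnn : Real.sqrt n * Real.sqrt n = (n:ℝ) := Real.mul_self_sqrt (by positivity)
  have hn0 : (0:ℝ) < n := by exact_mod_cast hn
  have hr1 : (1:ℝ) ≤ 1 + 9 * α * σv * σw * Cφ := by
    nlinarith [mul_pos (mul_pos (mul_pos hα hσv) hσw) hCφ]
  have hr0 : (0:ℝ) < 1 + 9 * α * σv * σw * Cφ := lt_of_lt_of_le one_pos hr1
  intro k
  induction k with
  | zero =>
      have h1 : l2norm (deltaAux φ α σv σw θ x 0) =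
          (σw / Real.sqrt n) * l2norm (wOut θ) := by
        show l2norm ((σw / Real.sqrt n) • wOut θ) = _
        rw [l2norm_smul, abs_of_pos (by positivity)]
      rw [h1, pow_zero, mul_one]
      calc (σw / Real.sqrt n) * l2norm (wOut θ) ≤
            (σw / Real.sqrt n) * (2 * Real.sqrt n) :=
            mul_le_mul_of_nonneg_left hθ.1 (by positivity)
        _ = 2 * σw := by field_simp
  | succ k ih =>
      set r : ℝ := 1 + 9 * α * σv * σw * Cφ with hrdef
      set S : ℝ := Real.sqrt n with hSdef
      set δ : Fin n → ℝ := deltaAux φ α σv σw θ x k with hδ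
      set m : ℕ := L - k with hm
      set D : Matrix (Fin n) (Fin n) ℝ :=
        Matrix.diagonal (fun i => deriv φ (gvec φ α σv σw θ x m i)) with hD
      have hterm : l2norm (((Wmat θ m).transpose * D * (Vmat θ m).transpose).mulVec δ) ≤
          3 * S * (Cφ * (3 * S * l2norm δ)) := by
        rw [← Matrix.mulVec_mulVec, ← Matrix.mulVec_mulVec]
        calc l2norm ((Wmat θ m).transpose.mulVec (D.mulVec ((Vmat θ m).transpose.mulVec δ)))
            ≤ specNorm (Wmat θ m) * l2norm (D.mulVec ((Vmat θ m).transpose.mulVec δ)) :=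
              spec_transpose_mulVec_le _ _
          _ ≤ 3 * S * (Cφ * (3 * S * l2norm δ)) := by
              apply mul_le_mul (specW_all hθ _) _ (l2norm_nonneg _) (by positivity)
              calc l2norm (D.mulVec ((Vmat θ m).transpose.mulVec δ))
                  ≤ Cφ * l2norm ((Vmat θ m).transpose.mulVec δ) :=
                    diag_mulVec_le _ _ hCφ.le (fun i => hφ' _)
                _ ≤ Cφ * (3 * S * l2norm δ) := by
                    apply mul_le_mul_of_nonneg_left _ hCφ.le
                    exact le_trans (spec_transpose_mulVec_le _ _)
                      (mul_le_mul_of_nonneg_right (specV_all hθ _) (l2norm_nonneg _))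
      have hstep : l2norm (deltaAux φ α σv σw θ x (k+1)) ≤
          l2norm δ + (α * σw * σv / n) * (3 * S * (Cφ * (3 * S * l2norm δ))) := by
        show l2norm (δ + (α * σw * σv / (n:ℝ)) •
            ((Wmat θ m).transpose * D * (Vmat θ m).transpose).mulVec δ) ≤ _
        refine le_trans (l2norm_add_le _ _) (add_le_add_right ?_ _)
        rw [l2norm_smul, abs_of_pos (by positivity : (0:ℝ) < α * σw * σv / n)]
        exact mul_le_mul_of_nonneg_left hterm (by positivity)
      have heq : l2norm δ + (α * σw * σv / n) * (3 * S * (Cφ * (3 * S * l2norm δ))) =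
          r * l2norm δ := by
        rw [hrdef]; field_simp; linear_combination (9 * α * σv * σw * Cφ * l2norm δ) * hnn
      rw [heq] at hstep
      calc l2norm (deltaAux φ α σv σw θ x (k+1)) ≤ r * l2norm δ := hstep
        _ ≤ r * (2 * σw * r ^ k) := mul_le_mul_of_nonneg_left ih hr0.le
        _ = 2 * σw * r ^ (k+1) := by ring

end GvecLip
section BackLip

variable {n L d : ℕ}

set_option maxHeartbeats 2000000 in
lemma deltaAux_lip (φ : ℝ → ℝ) (α σv σw Cφ B : ℝ) (x : Fin d → ℝ) (θ θ' : Params n L d)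
    (hn : 1 ≤ n) (hd : 1 ≤ d) (hα : 0 < α) (hσv : 0 < σv) (hσw : 0 < σw)
    (hCφ : 0 < Cφ) (hB : 0 ≤ B) (hφ : ∀ z, |φ z| ≤ Cφ * |z|)
    (hφ' : ∀ z, |deriv φ z| ≤ Cφ)
    (hφl : ∀ z z', |φ z - φ z'| ≤ Cφ * |z - z'|)
    (hφ'l : ∀ z z', |deriv φ z - deriv φ z'| ≤ Cφ * |z - z'|)
    (hx : l2norm x ≤ B) (hθ : SpectralBounds θ) (hθ' : SpectralBounds θ') :
    ∀ k, l2norm (deltaAux φ α σv σw θ x k - deltaAux φ α σv σw θ' x k) ≤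
      (σw + (6 * α * σv * σw ^ 2 * Cφ *
          (2 + 3 * (3 * σw * (2 * B + 18 * α * σv * σw * Cφ * B * L) *
            (1 + 9 * α * σv * σw * Cφ) ^ L))) * k) *
        (1 + 9 * α * σv * σw * Cφ) ^ k * paramNorm (θ - θ') := by
  have hsn : (1:ℝ) ≤ Real.sqrt n := sqrt_ge_one hn
  have hsn0 : (0:ℝ) < Real.sqrt n := lt_of_lt_of_le one_pos hsn
  have hnn : Real.sqrt n * Real.sqrt n = (n:ℝ) := Real.mul_self_sqrt (by positivity)
  have hn0 : (0:ℝ) < n := by exact_mod_cast hn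
  have hr1 : (1:ℝ) ≤ 1 + 9 * α * σv * σw * Cφ := by
    nlinarith [mul_pos (mul_pos (mul_pos hα hσv) hσw) hCφ]
  have hr0 : (0:ℝ) < 1 + 9 * α * σv * σw * Cφ := lt_of_lt_of_le one_pos hr1
  have hP : 0 ≤ paramNorm (θ - θ') := paramNorm_nonneg _
  set r : ℝ := 1 + 9 * α * σv * σw * Cφ with hrdef
  set P : ℝ := paramNorm (θ - θ') with hPdef
  set S : ℝ := Real.sqrt n with hSdef
  set G : ℝ := 3 * σw * (2 * B + 18 * α * σv * σw * Cφ * B * L) * r ^ L with hGdef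
  set c2 : ℝ := 6 * α * σv * σw ^ 2 * Cφ * (2 + 3 * G) with hc2def
  have hG0 : 0 ≤ G := by
    rw [hGdef]
    exact mul_nonneg (by positivity) (pow_nonneg hr0.le L)
  have hc20 : 0 ≤ c2 := by
    rw [hc2def]; nlinarith [mul_pos (mul_pos (mul_pos (mul_pos hα hσv) (by positivity : (0:ℝ) < σw ^ 2)) hCφ) (by nlinarith : (0:ℝ) < 2 + 3 * G)]
  have hSn' : S ≤ (n:ℝ) := by nlinarith
  intro k
  induction k with
  | zero =>
      have h1 : deltaAux φ α σv σw θ x 0 - deltaAux φ α σv σw θ' x 0 =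
          (σw / S) • (wOut θ - wOut θ') := by
        show (σw / S) • wOut θ - (σw / S) • wOut θ' = _
        rw [smul_sub]
      rw [h1, l2norm_smul, abs_of_pos (by positivity : (0:ℝ) < σw / S)]
      have h2 : σw / S ≤ σw := by
        rw [div_le_iff₀ hsn0]; nlinarith
      calc (σw / S) * l2norm (wOut θ - wOut θ') ≤ σw * P :=
            mul_le_mul h2 (wOut_sub_le θ θ') (l2norm_nonneg _) hσw.le
        _ = (σw + c2 * (0:ℕ)) * r ^ 0 * P := by push_cast; ring
  | succ k ih =>
      set m : ℕ := L - k with hm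
      set δ : Fin n → ℝ := deltaAux φ α σv σw θ x k with hδ
      set δ' : Fin n → ℝ := deltaAux φ α σv σw θ' x k with hδ'
      set Δ : ℝ := l2norm (δ - δ') with hΔdef
      set dθ : Fin n → ℝ := fun i => deriv φ (gvec φ α σv σw θ x m i) with hdθ
      set dθ' : Fin n → ℝ := fun i => deriv φ (gvec φ α σv σw θ' x m i) with hdθ'
      set D : Matrix (Fin n) (Fin n) ℝ := Matrix.diagonal dθ with hD
      set D' : Matrix (Fin n) (Fin n) ℝ := Matrix.diagonal dθ' with hD'
      set W : Matrix (Fin n) (Fin n) ℝ := Wmat θ m with hW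
      set W' : Matrix (Fin n) (Fin n) ℝ := Wmat θ' m with hW'
      set V : Matrix (Fin n) (Fin n) ℝ := Vmat θ m with hV
      set V' : Matrix (Fin n) (Fin n) ℝ := Vmat θ' m with hV'
      have hδ'B : l2norm δ' ≤ 2 * σw * r ^ k :=
        deltaAux_bound φ α σv σw Cφ B x θ' hn hα hσv hσw hCφ hφ' hθ' k
      have hgl : l2norm (gvec φ α σv σw θ x m - gvec φ α σv σw θ' x m) ≤ G * P :=
        gvec_lip φ α σv σw Cφ B x θ θ' hn hd hα hσv hσw hCφ hB hφ hφl hx hθ hθ' m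
          (Nat.sub_le L k)
      have hddiff : l2norm (dθ - dθ') ≤ Cφ * (G * P) :=
        le_trans (l2norm_comp_lip hCφ.le hφ'l _ _) (mul_le_mul_of_nonneg_left hgl hCφ.le)
      -- the decomposition identity
      have hid : (W.transpose * D * V.transpose).mulVec δ
            - (W'.transpose * D' * V'.transpose).mulVec δ' =
          W.transpose.mulVec (D.mulVec (V.transpose.mulVec (δ - δ')))
          + (W - W').transpose.mulVec (D.mulVec (V.transpose.mulVec δ'))
          + W'.transpose.mulVec ((D - D').mulVec (V.transpose.mulVec δ'))
          + W'.transpose.mulVec (D'.mulVec ((V - V').transpose.mulVec δ')) := by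
        simp only [← Matrix.mulVec_mulVec, Matrix.transpose_sub, Matrix.sub_mulVec,
          Matrix.mulVec_sub]
        abel
      -- norms of the four terms
      have ht1 : l2norm (W.transpose.mulVec (D.mulVec (V.transpose.mulVec (δ - δ')))) ≤
          3 * S * (Cφ * (3 * S * Δ)) := by
        refine le_trans (spec_transpose_mulVec_le _ _) ?_
        apply mul_le_mul (specW_all hθ _) _ (l2norm_nonneg _) (by positivity)
        refine le_trans (diag_mulVec_le _ _ hCφ.le fun i => hφ' _) ?_
        apply mul_le_mul_of_nonneg_left _ hCφ.le
        exact le_trans (spec_transpose_mulVec_le _ _)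
          (mul_le_mul_of_nonneg_right (specV_all hθ _) (l2norm_nonneg _))
      have ht2 : l2norm ((W - W').transpose.mulVec (D.mulVec (V.transpose.mulVec δ'))) ≤
          P * (Cφ * (3 * S * (2 * σw * r ^ k))) := by
        refine le_trans (frob_mulVec_le _ _) ?_
        apply mul_le_mul _ _ (l2norm_nonneg _) hP
        · rw [frobNorm_transpose]; exact Wmat_sub_frob_le θ θ' m
        · refine le_trans (diag_mulVec_le _ _ hCφ.le fun i => hφ' _) ?_
          apply mul_le_mul_of_nonneg_left _ hCφ.le
          refine le_trans (spec_transpose_mulVec_le _ _) ?_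
          exact mul_le_mul (specV_all hθ _) hδ'B (l2norm_nonneg _) (by positivity)
      have ht3 : l2norm (W'.transpose.mulVec ((D - D').mulVec (V.transpose.mulVec δ'))) ≤
          3 * S * ((Cφ * (G * P)) * (3 * S * (2 * σw * r ^ k))) := by
        refine le_trans (spec_transpose_mulVec_le _ _) ?_
        apply mul_le_mul (specW_all hθ' _) _ (l2norm_nonneg _) (by positivity)
        have hDD : D - D' = Matrix.diagonal (dθ - dθ') := by
          rw [hD, hD']; exact (Matrix.diagonal_sub dθ dθ').symm ▸ rfl
        rw [hDD]
        refine le_trans (diag_mulVec_le' _ _) ?_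
        apply mul_le_mul hddiff _ (l2norm_nonneg _) (by positivity)
        refine le_trans (spec_transpose_mulVec_le _ _) ?_
        exact mul_le_mul (specV_all hθ _) hδ'B (l2norm_nonneg _) (by positivity)
      have ht4 : l2norm (W'.transpose.mulVec (D'.mulVec ((V - V').transpose.mulVec δ'))) ≤
          3 * S * (Cφ * (P * (2 * σw * r ^ k))) := by
        refine le_trans (spec_transpose_mulVec_le _ _) ?_
        apply mul_le_mul (specW_all hθ' _) _ (l2norm_nonneg _) (by positivity)
        refine le_trans (diag_mulVec_le _ _ hCφ.le fun i => hφ' _) ?_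
        apply mul_le_mul_of_nonneg_left _ hCφ.le
        refine le_trans (frob_mulVec_le _ _) ?_
        rw [frobNorm_transpose]
        exact mul_le_mul (Vmat_sub_frob_le θ θ' m) hδ'B (l2norm_nonneg _) hP
      -- step inequality
      have hc : (0:ℝ) < α * σw * σv / n := div_pos (by positivity) hn0
      have hstep : l2norm (deltaAux φ α σv σw θ x (k+1) - deltaAux φ α σv σw θ' x (k+1)) ≤
          Δ + (α * σw * σv / n) *
            (3 * S * (Cφ * (3 * S * Δ))
              + P * (Cφ * (3 * S * (2 * σw * r ^ k)))
              + 3 * S * ((Cφ * (G * P)) * (3 * S * (2 * σw * r ^ k)))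
              + 3 * S * (Cφ * (P * (2 * σw * r ^ k)))) := by
        have hexp : deltaAux φ α σv σw θ x (k+1) - deltaAux φ α σv σw θ' x (k+1) =
            (δ - δ') + (α * σw * σv / (n:ℝ)) •
              ((W.transpose * D * V.transpose).mulVec δ
                - (W'.transpose * D' * V'.transpose).mulVec δ') := by
          show (δ + (α * σw * σv / (n:ℝ)) • (W.transpose * D * V.transpose).mulVec δ)
              - (δ' + (α * σw * σv / (n:ℝ)) • (W'.transpose * D' * V'.transpose).mulVec δ') = _
          rw [smul_sub]; abel
        rw [hexp]
        refine le_trans (l2norm_add_le _ _) (add_le_add_right ?_ Δ)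
        rw [l2norm_smul, abs_of_pos hc]
        apply mul_le_mul_of_nonneg_left _ hc.le
        rw [hid]
        refine le_trans (l2norm_add_le _ _) (add_le_add ?_ ht4)
        refine le_trans (l2norm_add_le _ _) (add_le_add ?_ ht3)
        exact le_trans (l2norm_add_le _ _) (add_le_add ht1 ht2)
      -- simplify the coefficient
      have hrk : (0:ℝ) ≤ r ^ k := pow_nonneg hr0.le k
      have e1 : (α * σw * σv / n) * (3 * S * (Cφ * (3 * S * Δ))) =
          9 * α * σv * σw * Cφ * Δ := by
        field_simp; linear_combination (9 * Δ) * hnn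
      have e3 : (α * σw * σv / n) * (3 * S * ((Cφ * (G * P)) * (3 * S * (2 * σw * r ^ k)))) =
          18 * α * σv * σw ^ 2 * Cφ * G * r ^ k * P := by
        field_simp; linear_combination (18 * P * (3 * σw * (2 * B + 18 * α * σv * σw * Cφ * B * L) * (1 + 9 * α * σv * σw * Cφ) ^ L)) * hnn
      have hX : (0:ℝ) ≤ 6 * α * σv * σw ^ 2 * Cφ * r ^ k * P := by
        apply mul_nonneg _ hP
        apply mul_nonneg _ hrk
        positivity
      have hdiv1 : S / (n:ℝ) ≤ 1 := (div_le_one hn0).2 hSn'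
      have le2 : (α * σw * σv / n) * (P * (Cφ * (3 * S * (2 * σw * r ^ k)))) ≤
          6 * α * σv * σw ^ 2 * Cφ * r ^ k * P := by
        have heq2 : (α * σw * σv / n) * (P * (Cφ * (3 * S * (2 * σw * r ^ k)))) =
            (6 * α * σv * σw ^ 2 * Cφ * r ^ k * P) * (S / n) := by
          field_simp; ring
        rw [heq2]
        calc (6 * α * σv * σw ^ 2 * Cφ * r ^ k * P) * (S / n) ≤
              (6 * α * σv * σw ^ 2 * Cφ * r ^ k * P) * 1 :=
              mul_le_mul_of_nonneg_left hdiv1 hX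
          _ = 6 * α * σv * σw ^ 2 * Cφ * r ^ k * P := mul_one _
      have le4 : (α * σw * σv / n) * (3 * S * (Cφ * (P * (2 * σw * r ^ k)))) ≤
          6 * α * σv * σw ^ 2 * Cφ * r ^ k * P := by
        have heq4 : (α * σw * σv / n) * (3 * S * (Cφ * (P * (2 * σw * r ^ k)))) =
            (6 * α * σv * σw ^ 2 * Cφ * r ^ k * P) * (S / n) := by
          field_simp; ring
        rw [heq4]
        calc (6 * α * σv * σw ^ 2 * Cφ * r ^ k * P) * (S / n) ≤
              (6 * α * σv * σw ^ 2 * Cφ * r ^ k * P) * 1 :=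
              mul_le_mul_of_nonneg_left hdiv1 hX
          _ = 6 * α * σv * σw ^ 2 * Cφ * r ^ k * P := mul_one _
      clear_value Δ δ δ' G c2 r P S
      have hfinal : l2norm (deltaAux φ α σv σw θ x (k+1) - deltaAux φ α σv σw θ' x (k+1)) ≤
          r * Δ + c2 * r ^ k * P := by
        have hsum := hstep
        rw [mul_add, mul_add, mul_add, e1, e3] at hsum
        have : Δ + (9 * α * σv * σw * Cφ * Δ
            + (α * σw * σv / n) * (P * (Cφ * (3 * S * (2 * σw * r ^ k))))
            + 18 * α * σv * σw ^ 2 * Cφ * G * r ^ k * P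
            + (α * σw * σv / n) * (3 * S * (Cφ * (P * (2 * σw * r ^ k))))) ≤
            r * Δ + c2 * r ^ k * P := by
          have hre : r * Δ = Δ + 9 * α * σv * σw * Cφ * Δ := by rw [hrdef]; ring
          have hce : c2 * r ^ k * P = 2 * (6 * α * σv * σw ^ 2 * Cφ * r ^ k * P)
              + 18 * α * σv * σw ^ 2 * Cφ * G * r ^ k * P := by rw [hc2def]; ring
          linarith only [le2, le4, hre, hce]
        linarith only [hsum, this]
      calc l2norm (deltaAux φ α σv σw θ x (k+1) - deltaAux φ α σv σw θ' x (k+1))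
          ≤ r * Δ + c2 * r ^ k * P := hfinal
        _ ≤ r * ((σw + c2 * k) * r ^ k * P) + c2 * (r * r ^ k) * P := by
            have h1 := mul_le_mul_of_nonneg_left ih hr0.le
            have h2 : c2 * r ^ k * P ≤ c2 * (r * r ^ k) * P := by
              nlinarith [mul_nonneg (mul_nonneg hc20 hrk) hP, hr1, hc20, hrk, hP]
            linarith only [h1, h2, hfinal]
        _ = (σw + c2 * (k+1:ℕ)) * r ^ (k+1) * P := by push_cast; ring

end BackLip
/-- **Backward parameter-Lipschitz bound.** There is a constant K depending only on
L, α, σ_v, σ_w, C_φ, B and d (not on n) such that for all parameter vectors θ, θ̃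
satisfying the spectral bounds and every ℓ ∈ {0,…,L}:
‖δ^{(ℓ)}(θ) − δ^{(ℓ)}(θ̃)‖₂ ≤ K‖θ − θ̃‖₂. -/
theorem backward_parameter_lipschitz
    (L d : ℕ) (hL : 1 ≤ L) (hd : 1 ≤ d)
    (α σv σw Cφ B : ℝ) (hα : 0 < α) (hσv : 0 < σv) (hσw : 0 < σw) (hCφ : 0 < Cφ)
    (hB : 0 ≤ B) :
    ∃ K : ℝ, 0 < K ∧
      ∀ (n : ℕ) (φ : ℝ → ℝ), Differentiable ℝ φ →
        (∀ z : ℝ, |φ z| ≤ Cφ * |z|) → (∀ z : ℝ, |deriv φ z| ≤ Cφ) →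
        (∀ z z' : ℝ, |φ z - φ z'| ≤ Cφ * |z - z'|) →
        (∀ z z' : ℝ, |deriv φ z - deriv φ z'| ≤ Cφ * |z - z'|) →
        ∀ x : Fin d → ℝ, l2norm x ≤ B →
        ∀ θ θ' : Params n L d, SpectralBounds θ → SpectralBounds θ' →
          ∀ ℓ : ℕ, ℓ ≤ L →
            l2norm (deltaVec φ α σv σw θ x ℓ - deltaVec φ α σv σw θ' x ℓ) ≤
              K * paramNorm (θ - θ') := by
  have hr1 : (1:ℝ) ≤ 1 + 9 * α * σv * σw * Cφ := by
    nlinarith [mul_pos (mul_pos (mul_pos hα hσv) hσw) hCφ]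
  have hr0 : (0:ℝ) < 1 + 9 * α * σv * σw * Cφ := lt_of_lt_of_le one_pos hr1
  set r : ℝ := 1 + 9 * α * σv * σw * Cφ with hrdef
  set G : ℝ := 3 * σw * (2 * B + 18 * α * σv * σw * Cφ * B * L) * r ^ L with hGdef
  set c2 : ℝ := 6 * α * σv * σw ^ 2 * Cφ * (2 + 3 * G) with hc2def
  have hG0 : 0 ≤ G := by
    rw [hGdef]
    exact mul_nonneg (by positivity) (pow_nonneg hr0.le L)
  have hc20 : 0 ≤ c2 := by
    rw [hc2def]
    apply mul_nonneg (by positivity)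
    nlinarith
  have hrL : (0:ℝ) < r ^ L := pow_pos hr0 L
  refine ⟨(σw + c2 * L) * r ^ L, ?_, ?_⟩
  · apply mul_pos _ hrL
    have : 0 ≤ c2 * L := mul_nonneg hc20 (Nat.cast_nonneg L)
    linarith
  intro n φ hdiff hφ hφ' hφl hφ'l x hx θ θ' hθ hθ' ℓ hℓ
  rcases Nat.eq_zero_or_pos n with hn0 | hn1
  · subst hn0
    have hz : l2norm (deltaVec φ α σv σw θ x ℓ - deltaVec φ α σv σw θ' x ℓ) = 0 := by
      simp [l2norm]
    rw [hz]
    apply mul_nonneg _ (paramNorm_nonneg _)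
    apply mul_nonneg _ hrL.le
    have : 0 ≤ c2 * L := mul_nonneg hc20 (Nat.cast_nonneg L)
    linarith
  · have h := deltaAux_lip φ α σv σw Cφ B x θ θ' hn1 hd hα hσv hσw hCφ hB hφ hφ' hφl hφ'l
      hx hθ hθ' (L - ℓ)
    have hdv : deltaVec φ α σv σw θ x ℓ - deltaVec φ α σv σw θ' x ℓ =
        deltaAux φ α σv σw θ x (L - ℓ) - deltaAux φ α σv σw θ' x (L - ℓ) := rfl
    rw [hdv]
    refine le_trans h ?_
    apply mul_le_mul_of_nonneg_right _ (paramNorm_nonneg _)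
    have hk : L - ℓ ≤ L := Nat.sub_le L ℓ
    have hcast : ((L - ℓ : ℕ) : ℝ) ≤ (L : ℝ) := by exact_mod_cast hk
    have h1 : σw + c2 * ((L - ℓ : ℕ) : ℝ) ≤ σw + c2 * L := by
      have := mul_le_mul_of_nonneg_left hcast hc20
      linarith
    have h2 : r ^ (L - ℓ) ≤ r ^ L := pow_le_pow_right₀ hr1 hk
    apply mul_le_mul h1 h2 (pow_nonneg hr0.le _)
    have : 0 ≤ c2 * L := mul_nonneg hc20 (Nat.cast_nonneg L)
    linarith

end
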